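/- For k ≠ 0, β₁ ≠ 0, c₃ ≠ 0, the function U(ξ) = (−kβ₀ + √(k²β₀² − 2kβ₁(c₃ξ + c₄)))/(kβ₁) satisfies the ODE c₃ + k(β₀ + β₁U(ξ))U'(ξ) = 0 on the open set where k²β₀² − 2kβ₁(c₃ξ + c₄) > 0. -/

import Mathlib

theorem stmt2 (k β₀ β₁ c₃ c₄ : ℝ) (hk : k ≠ 0) (hβ₁ : β₁ ≠ 0) (hc₃ : c₃ ≠ 0)
    (U : ℝ → ℝ)
    (hU : ∀ ξ : ℝ, U ξ =
      (- k * β₀ + Real.sqrt (k^2 * β₀^2 - 2 * k * β₁ * (c₃ * ξ + c₄))) / (k * β₁)) :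
    ∀ ξ : ℝ, k^2 * β₀^2 - 2 * k * β₁ * (c₃ * ξ + c₄) > 0 →
      c₃ + k * (β₀ + β₁ * U ξ) * deriv U ξ = 0 := by
  intro ξ hpos
  have hUeq : U = fun ξ =>
      (- k * β₀ + Real.sqrt (k^2 * β₀^2 - 2 * k * β₁ * (c₃ * ξ + c₄))) / (k * β₁) :=
    funext hU
  set D : ℝ → ℝ := fun ξ => k^2 * β₀^2 - 2 * k * β₁ * (c₃ * ξ + c₄) with hDdef
  have hD : HasDerivAt D (-(2 * k * β₁ * c₃)) ξ := by
    have h : HasDerivAt (fun ξ : ℝ => k^2 * β₀^2 - 2 * k * β₁ * (c₃ * ξ + c₄))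
        (-(2 * k * β₁ * c₃)) ξ := by
      have h1 : HasDerivAt (fun ξ : ℝ => c₃ * ξ + c₄) c₃ ξ := by
        simpa using ((hasDerivAt_id ξ).const_mul c₃).add_const c₄
      exact (h1.const_mul (2 * k * β₁)).const_sub (k^2 * β₀^2)
    exact h
  have hDx : D ξ ≠ 0 := ne_of_gt hpos
  have hs : Real.sqrt (D ξ) > 0 := Real.sqrt_pos.mpr hpos
  have hsq : HasDerivAt (fun ξ => Real.sqrt (D ξ))
      (-(2 * k * β₁ * c₃) / (2 * Real.sqrt (D ξ))) ξ := hD.sqrt hDx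
  have hU' : HasDerivAt U (-(2 * k * β₁ * c₃) / (2 * Real.sqrt (D ξ)) / (k * β₁)) ξ := by
    rw [hUeq]
    exact (hsq.const_add (- k * β₀)).div_const (k * β₁)
  rw [hU'.deriv, hU ξ]
  have hsne : Real.sqrt (D ξ) ≠ 0 := ne_of_gt hs
  rw [hDdef]
  field_simp
  rw [add_neg_cancel_left, div_self (Real.sqrt_ne_zero'.mpr (by linarith)), add_neg_cancel, mul_zero]
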